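/- There exist universal constants α₁, α₂, ρ > 0 such that for every sufficiently large even integer n, every positive integer k ≤ α₁√n, and every measurable f : ℝᵏ → [0,∞) with ‖f‖_∞ ≤ e^{α₂√n}, C_{n,k} ∫_{ℝᵏ ∖ ρ n^{−1/4} B_k} f(x) (1−|x|²)₊^{(n−k−2)/2} dx ≤ (2α₁/ρ²) e^{−α₂√n}, where C_{n,k} = (n−k)·Vol(B_{n−k}) / (n·Vol(B_n)). -/

import Mathlib

open MeasureTheory Matrix

set_option synthInstance.maxHeartbeats 1000000
set_option maxHeartbeats 1000000

noncomputable section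

namespace Paper

/-- The constant `C_{m,k} = (m−k)·Vol(B_{m−k}) / (m·Vol(B_m))` from the change-of-variables
formula on the sphere. -/
def Cmk (m k : ℕ) : ℝ :=
  ((m - k : ℕ) : ℝ) * (volume (Metric.closedBall (0 : EuclideanSpace ℝ (Fin (m - k))) 1)).toReal /
    ((m : ℝ) * (volume (Metric.closedBall (0 : EuclideanSpace ℝ (Fin m)) 1)).toReal)

open Metric

lemma inner_ball_volume (m : ℕ) (hm : 0 < m) (c : ℝ) :
    volume {y : Fin m → ℝ | ∑ j, y j ^ 2 ≤ c} =
      ENNReal.ofReal ((max c 0) ^ ((m : ℝ) / 2)) *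
        volume (closedBall (0 : EuclideanSpace ℝ (Fin m)) 1) := by
  have hmeas : MeasurableSet {y : Fin m → ℝ | ∑ j, y j ^ 2 ≤ c} := by
    apply measurableSet_le _ measurable_const
    exact Finset.measurable_sum _ fun j _ => (measurable_pi_apply j).pow_const 2
  have h1 := (EuclideanSpace.volume_preserving_symm_measurableEquiv_toLp (ι := Fin m)).measure_preimage
      hmeas.nullMeasurableSet
  have hpre : (MeasurableEquiv.toLp 2 (Fin m → ℝ)).symm ⁻¹' {y : Fin m → ℝ | ∑ j, y j ^ 2 ≤ c}
      = {Y : EuclideanSpace ℝ (Fin m) | ∑ j, Y j ^ 2 ≤ c} := rfl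
  rw [hpre] at h1
  rw [← h1]
  rcases le_or_gt 0 c with hc | hc
  · have hset : {Y : EuclideanSpace ℝ (Fin m) | ∑ j, Y j ^ 2 ≤ c}
        = closedBall (0 : EuclideanSpace ℝ (Fin m)) (Real.sqrt c) := by
      ext Y
      simp only [Set.mem_setOf_eq, mem_closedBall, dist_zero_right, EuclideanSpace.norm_eq]
      rw [Real.sqrt_le_sqrt_iff hc]
      simp [sq_abs]
    rw [hset, Measure.addHaar_closedBall' _ _ (Real.sqrt_nonneg c)]
    congr 2
    rw [max_eq_left hc, finrank_euclideanSpace_fin, ← Real.rpow_natCast (Real.sqrt c) m,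
      Real.sqrt_eq_rpow, ← Real.rpow_mul hc]
    congr 1
    ring
  · have hset : {Y : EuclideanSpace ℝ (Fin m) | ∑ j, Y j ^ 2 ≤ c} = ∅ := by
      ext Y
      simp only [Set.mem_setOf_eq, Set.mem_empty_iff_false, iff_false, not_le]
      exact hc.trans_le (Finset.sum_nonneg fun j _ => sq_nonneg _)
    rw [hset, max_eq_right hc.le, Real.zero_rpow (by positivity), ENNReal.ofReal_zero,
      zero_mul, measure_empty]



lemma slice (k m : ℕ) (hm : 0 < m) :
    volume (closedBall (0 : EuclideanSpace ℝ (Fin (k + m))) 1) =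
      volume (closedBall (0 : EuclideanSpace ℝ (Fin m)) 1) *
        ∫⁻ x : EuclideanSpace ℝ (Fin k),
          ENNReal.ofReal ((max (1 - ‖x‖ ^ 2) 0) ^ ((m : ℝ) / 2)) := by
  classical
  set S : Set ((Fin k → ℝ) × (Fin m → ℝ)) :=
    {p | (∑ i, p.1 i ^ 2) + ∑ j, p.2 j ^ 2 ≤ 1} with hS
  have hSmeas : MeasurableSet S := by
    apply measurableSet_le _ measurable_const
    exact ((Finset.measurable_sum _ fun i _ =>
        ((measurable_pi_apply i).comp measurable_fst).pow_const 2)).add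
      (Finset.measurable_sum _ fun j _ =>
        ((measurable_pi_apply j).comp measurable_snd).pow_const 2)
  -- B' in (Fin (k+m) → ℝ)
  set B' : Set (Fin (k + m) → ℝ) := {g | ∑ l, g l ^ 2 ≤ 1} with hB'
  have hB'meas : MeasurableSet B' := by
    apply measurableSet_le _ measurable_const
    exact Finset.measurable_sum _ fun l _ => (measurable_pi_apply l).pow_const 2
  -- step A
  have hA : volume (closedBall (0 : EuclideanSpace ℝ (Fin (k + m))) 1) = volume B' := by
    have h := (EuclideanSpace.volume_preserving_symm_measurableEquiv_toLp (ι := Fin (k + m))).measure_preimage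
      hB'meas.nullMeasurableSet
    rw [← h]
    congr 1
    ext z
    simp only [Set.mem_preimage, hB', Set.mem_setOf_eq, mem_closedBall, dist_zero_right,
      EuclideanSpace.norm_eq]
    rw [show (1 : ℝ) = Real.sqrt 1 by simp, Real.sqrt_le_sqrt_iff zero_le_one, Real.sqrt_one]
    simp [sq_abs]
  -- step B : to sum-pi
  set B'' : Set (Fin k ⊕ Fin m → ℝ) := {h | ∑ s, h s ^ 2 ≤ 1} with hB''
  have hB''meas : MeasurableSet B'' := by
    apply measurableSet_le _ measurable_const
    exact Finset.measurable_sum _ fun s _ => (measurable_pi_apply s).pow_const 2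
  have hB : volume B' = volume B'' := by
    have hmp := (volume_measurePreserving_piCongrLeft (fun _ : Fin (k + m) => ℝ)
        finSumFinEquiv).symm (MeasurableEquiv.piCongrLeft (fun _ : Fin (k + m) => ℝ) finSumFinEquiv)
    have h := hmp.measure_preimage hB''meas.nullMeasurableSet
    rw [← h]
    congr 1
    ext g
    simp only [Set.mem_preimage, hB'', Set.mem_setOf_eq, hB',
      MeasurableEquiv.piCongrLeft, MeasurableEquiv.symm, MeasurableEquiv.coe_mk,
      Equiv.piCongrLeft_symm_apply]
    rw [Equiv.sum_comp finSumFinEquiv (fun l => g l ^ 2)]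
  -- step C : to product
  have hC : volume B'' = volume S := by
    have h := (volume_measurePreserving_sumPiEquivProdPi
        (fun _ : Fin k ⊕ Fin m => ℝ)).measure_preimage hSmeas.nullMeasurableSet
    rw [← h]
    congr 1
    ext hfun
    simp only [Set.mem_preimage, hS, Set.mem_setOf_eq, hB'',
      MeasurableEquiv.sumPiEquivProdPi, MeasurableEquiv.coe_mk,
      Equiv.sumPiEquivProdPi_apply]
    rw [← Fintype.sum_sum_type (fun s => hfun s ^ 2)]
  -- step D : Fubini
  have hD : volume S = ∫⁻ x : Fin k → ℝ,
      ENNReal.ofReal ((max (1 - ∑ i, x i ^ 2) 0) ^ ((m : ℝ) / 2)) *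
        volume (closedBall (0 : EuclideanSpace ℝ (Fin m)) 1) := by
    rw [Measure.volume_eq_prod, Measure.prod_apply hSmeas]
    congr 1
    ext x
    have hx : Prod.mk x ⁻¹' S = {y : Fin m → ℝ | ∑ j, y j ^ 2 ≤ 1 - ∑ i, x i ^ 2} := by
      ext y
      simp only [Set.mem_preimage, hS, Set.mem_setOf_eq]
      constructor
      · intro h; linarith
      · intro h; linarith
    rw [hx, inner_ball_volume m hm]
  rw [hA, hB, hC, hD]
  -- pull the constant out and transfer to EuclideanSpace
  have hVm : volume (closedBall (0 : EuclideanSpace ℝ (Fin m)) 1) ≠ ⊤ :=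
    (measure_closedBall_lt_top).ne
  rw [lintegral_mul_const' _ _ hVm]
  rw [mul_comm]
  congr 1
  have hmeasg : Measurable (fun x : Fin k → ℝ =>
      ENNReal.ofReal ((max (1 - ∑ i, x i ^ 2) 0) ^ ((m : ℝ) / 2))) := by
    apply ENNReal.measurable_ofReal.comp
    apply Measurable.comp (f := fun x : Fin k → ℝ => max (1 - ∑ i, x i ^ 2) 0)
      (g := fun t : ℝ => t ^ ((m : ℝ) / 2))
    · exact (Real.continuous_rpow_const (by positivity)).measurable
    · exact ((measurable_const.sub
        (Finset.measurable_sum _ fun i _ => (measurable_pi_apply i).pow_const 2)).max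
        measurable_const)
  have h := (EuclideanSpace.volume_preserving_symm_measurableEquiv_toLp (ι := Fin k)).lintegral_comp hmeasg
  rw [← h]
  apply lintegral_congr
  intro x
  congr 3
  have : ∑ i, (x i) ^ 2 = ‖x‖ ^ 2 := by
    rw [EuclideanSpace.norm_eq, Real.sq_sqrt (by positivity)]
    simp [sq_abs]
  rw [← this]
  rfl

lemma lintegral_half_smul (k : ℕ) (g : EuclideanSpace ℝ (Fin k) → ENNReal) (hg : Measurable g) :
    ∫⁻ x : EuclideanSpace ℝ (Fin k), g ((2⁻¹ : ℝ) • x) =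
      ENNReal.ofReal ((2 : ℝ) ^ k) * ∫⁻ x, g x := by
  have hmap := Measure.map_addHaar_smul (volume : Measure (EuclideanSpace ℝ (Fin k)))
    (r := (2⁻¹ : ℝ)) (by norm_num)
  calc ∫⁻ x : EuclideanSpace ℝ (Fin k), g ((2⁻¹ : ℝ) • x)
      = ∫⁻ y, g y ∂(Measure.map (fun x : EuclideanSpace ℝ (Fin k) => (2⁻¹ : ℝ) • x) volume) := by
        rw [lintegral_map hg (measurable_const_smul _)]
    _ = ENNReal.ofReal ((2 : ℝ) ^ k) * ∫⁻ x, g x := by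
        rw [show (fun x : EuclideanSpace ℝ (Fin k) => (2⁻¹ : ℝ) • x) = ((2⁻¹ : ℝ) • ·) from rfl,
          hmap, lintegral_smul_measure]
        congr 2
        rw [finrank_euclideanSpace_fin]
        rw [abs_of_nonneg (by positivity)]
        rw [inv_pow, inv_inv]

lemma exp_aux {a b : ℝ} (h : a + 6 ≤ b) : Real.exp a ≤ (1 / 200) * Real.exp b := by
  have h27 : (2.7182818283 : ℝ) < Real.exp 1 := Real.exp_one_gt_d9
  have h200 : (200 : ℝ) ≤ Real.exp 6 := by
    have h6 : ((2.7182818283 : ℝ)) ^ (6:ℕ) ≤ (Real.exp 1) ^ (6:ℕ) :=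
      pow_le_pow_left₀ (by norm_num) h27.le 6
    have he : (Real.exp 1) ^ (6:ℕ) = Real.exp 6 := by
      rw [← Real.exp_nat_mul]; norm_num
    nlinarith [h6, he]
  calc Real.exp a ≤ Real.exp (b - 6) := Real.exp_le_exp.2 (by linarith)
    _ = Real.exp b / Real.exp 6 := by rw [Real.exp_sub]
    _ ≤ Real.exp b / 200 := by
        apply div_le_div_of_nonneg_left (Real.exp_pos b).le (by norm_num) h200
    _ = (1 / 200) * Real.exp b := by ring

lemma two_rpow_le_exp {K : ℝ} (hK : 0 ≤ K) : (2:ℝ) ^ K ≤ Real.exp K := by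
  have h2 : (2:ℝ) ≤ Real.exp 1 := by
    have := Real.add_one_le_exp (1:ℝ); linarith
  calc (2:ℝ) ^ K ≤ (Real.exp 1) ^ K :=
        Real.rpow_le_rpow (by norm_num) h2 hK
    _ = Real.exp K := by rw [← Real.exp_mul, one_mul]

lemma num1 {s K P q : ℝ} (hs : (10:ℝ)^5 ≤ s) (hK1 : 1 ≤ K) (hKs : K ≤ s)
    (hP2 : 2 * P = s^2 - K) (hq : q = P - 1) :
    Real.exp s * (((3/4 : ℝ) ^ P * (1/2 : ℝ) ^ K)⁻¹ * (1/2 : ℝ) ^ q) ≤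
      (1/100) * Real.exp (-s) := by
  have hP0 : 0 < P := by nlinarith
  have e1 : ((3/4 : ℝ) ^ P * (1/2 : ℝ) ^ K)⁻¹ = (4/3 : ℝ) ^ P * (2:ℝ) ^ K := by
    rw [mul_inv, ← Real.inv_rpow (by norm_num : (0:ℝ) ≤ 3/4),
      ← Real.inv_rpow (by norm_num : (0:ℝ) ≤ 1/2)]
    norm_num
  have e2 : (1/2 : ℝ) ^ q = 2 * (1/2 : ℝ) ^ P := by
    rw [hq, Real.rpow_sub (by norm_num : (0:ℝ) < 1/2), Real.rpow_one]
    ring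
  have e3 : (4/3 : ℝ) ^ P * (1/2 : ℝ) ^ P = (2/3 : ℝ) ^ P := by
    rw [← Real.mul_rpow (by norm_num) (by norm_num)]
    norm_num
  have e4 : (2/3 : ℝ) ^ P ≤ Real.exp (-(1/3) * P) := by
    calc (2/3 : ℝ) ^ P ≤ (Real.exp (-(1/3))) ^ P := by
          apply Real.rpow_le_rpow (by norm_num) _ hP0.le
          have := Real.add_one_le_exp (-(1/3) : ℝ); linarith
      _ = Real.exp (-(1/3) * P) := by rw [← Real.exp_mul]
  have e5 : (2:ℝ) ^ K ≤ Real.exp K := two_rpow_le_exp (by linarith)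
  have key : Real.exp s * (((3/4 : ℝ) ^ P * (1/2 : ℝ) ^ K)⁻¹ * (1/2 : ℝ) ^ q)
      = 2 * (Real.exp s * ((2/3 : ℝ) ^ P * (2:ℝ) ^ K)) := by
    rw [e1, e2, ← e3]; ring
  rw [key]
  have hb : Real.exp s * ((2/3 : ℝ) ^ P * (2:ℝ) ^ K) ≤ Real.exp (s + (-(1/3) * P) + K) := by
    rw [Real.exp_add, Real.exp_add]
    have h1 : (0:ℝ) ≤ (2/3 : ℝ) ^ P := Real.rpow_nonneg (by norm_num) _
    have h2 : (0:ℝ) ≤ (2:ℝ) ^ K := Real.rpow_nonneg (by norm_num) _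
    have := mul_le_mul e4 e5 h2 (Real.exp_pos _).le
    nlinarith [Real.exp_pos s, this]
  have hexp : Real.exp (s + (-(1/3) * P) + K) ≤ (1/200) * Real.exp (-s) := by
    apply exp_aux
    nlinarith
  nlinarith [Real.exp_pos (-s), hb, hexp]

lemma num2 {s K P r A : ℝ} (hs : (10:ℝ)^5 ≤ s) (hK1 : 1 ≤ K) (hKs : K ≤ s)
    (hP2 : 2 * P = s^2 - K) (hr2s : r^2 * s = 100)
    (hbase0 : (0:ℝ) < 1 - (3/4)*r^2) (hA : A = (1 - (3/4)*r^2) ^ P) :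
    Real.exp s * (2 * A * (2:ℝ) ^ K) ≤ (1/100) * Real.exp (-s) := by
  have hs0 : 0 < s := by nlinarith
  have hP0 : 0 < P := by nlinarith
  have eA : A ≤ Real.exp (-((3/4) * r^2) * P) := by
    rw [hA]
    calc (1 - (3/4)*r^2) ^ P ≤ (Real.exp (-((3/4) * r^2))) ^ P := by
          apply Real.rpow_le_rpow hbase0.le _ hP0.le
          have := Real.add_one_le_exp (-((3/4) * r^2)); linarith
      _ = Real.exp (-((3/4) * r^2) * P) := by rw [← Real.exp_mul]
  have e5 : (2:ℝ) ^ K ≤ Real.exp K := two_rpow_le_exp (by linarith)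
  have hb : Real.exp s * (2 * A * (2:ℝ) ^ K)
      ≤ 2 * Real.exp (s + (-((3/4) * r^2) * P) + K) := by
    rw [Real.exp_add, Real.exp_add]
    have hA0 : 0 < A := hA ▸ Real.rpow_pos_of_pos hbase0 _
    have h2 : (0:ℝ) ≤ (2:ℝ) ^ K := Real.rpow_nonneg (by norm_num) _
    have := mul_le_mul eA e5 h2 (Real.exp_pos _).le
    nlinarith [Real.exp_pos s, this, hA0]
  have hX : r^2 * P * (2*s) = 100 * (s^2 - K) := by
    calc r^2 * P * (2*s) = (r^2 * s) * (2 * P) := by ring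
      _ = 100 * (s^2 - K) := by rw [hr2s, hP2]
  have hexp : Real.exp (s + (-((3/4) * r^2) * P) + K) ≤ (1/200) * Real.exp (-s) := by
    apply exp_aux
    nlinarith [hX, mul_le_mul_of_nonneg_right hKs hs0.le, sq_nonneg s, hs0]
  nlinarith [Real.exp_pos (-s), hb, hexp]

lemma ptwise (k : ℕ) (P q r A : ℝ) (hq0 : 0 < q) (hP0 : 0 < P) (hq : q = P - 1)
    (hr0 : 0 < r) (hrsmall : r ^ 2 ≤ 1/1000) (hbase0 : (0:ℝ) < 1 - (3/4)*r^2)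
    (hA : A = (1 - (3/4)*r^2) ^ P)
    (x : EuclideanSpace ℝ (Fin k)) (hx : r < ‖x‖) :
    ENNReal.ofReal ((max (1 - ‖x‖ ^ 2) 0) ^ q) ≤
      ENNReal.ofReal ((1/2 : ℝ) ^ q) *
        (closedBall (0 : EuclideanSpace ℝ (Fin k)) 1).indicator (fun _ => 1) x +
      ENNReal.ofReal (2*A) * ENNReal.ofReal ((max (1 - ‖(2⁻¹ : ℝ) • x‖ ^ 2) 0) ^ P) := by
  have hA0 : 0 < A := hA ▸ Real.rpow_pos_of_pos hbase0 _
  have ht0 : (0:ℝ) ≤ ‖x‖ := norm_nonneg x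
  rcases le_or_gt 1 ‖x‖ with h1 | h1
  · have hmax : max (1 - ‖x‖^2) 0 = 0 := max_eq_right (by nlinarith)
    simp only [hmax, Real.zero_rpow hq0.ne', ENNReal.ofReal_zero]
    exact zero_le
  · have hx1 : x ∈ closedBall (0 : EuclideanSpace ℝ (Fin k)) 1 := by
      simpa [mem_closedBall, dist_zero_right] using h1.le
    have hind : (closedBall (0 : EuclideanSpace ℝ (Fin k)) 1).indicator
        (fun _ => (1:ENNReal)) x = 1 := Set.indicator_of_mem hx1 _
    have h1t : (0:ℝ) < 1 - ‖x‖^2 := by nlinarith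
    have hmax : max (1 - ‖x‖^2) 0 = 1 - ‖x‖^2 := max_eq_left h1t.le
    have hsm : ‖(2⁻¹ : ℝ) • x‖ = 2⁻¹ * ‖x‖ := by
      rw [norm_smul]; norm_num
    have hmax2 : max (1 - ‖(2⁻¹ : ℝ) • x‖^2) 0 = 1 - ‖x‖^2/4 := by
      rw [hsm, show (1 - (2⁻¹*‖x‖)^2) = 1 - ‖x‖^2/4 by ring]
      apply max_eq_left
      nlinarith
    rcases le_or_gt (1 - ‖x‖^2) (1/2) with h2 | h2
    · refine le_trans ?_ (le_add_right le_rfl)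
      rw [hind, mul_one]
      simp only [hmax]
      exact ENNReal.ofReal_le_ofReal (Real.rpow_le_rpow h1t.le h2 hq0.le)
    · refine le_trans ?_ (le_add_left le_rfl)
      simp only [hmax, hmax2]
      rw [← ENNReal.ofReal_mul (by positivity)]
      apply ENNReal.ofReal_le_ofReal
      have e1 : (1 - ‖x‖^2) ^ q = (1 - ‖x‖^2) ^ P / (1 - ‖x‖^2) := by
        rw [hq, Real.rpow_sub h1t, Real.rpow_one]
      have e2 : (1 - ‖x‖^2) ^ P ≤ ((1 - (3/4)*r^2) * (1 - ‖x‖^2/4)) ^ P := by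
        apply Real.rpow_le_rpow h1t.le _ hP0.le
        have hrt : r^2 ≤ ‖x‖^2 := by nlinarith
        nlinarith [hrt, sq_nonneg r]
      have e3 : ((1 - (3/4)*r^2) * (1 - ‖x‖^2/4)) ^ P = A * (1 - ‖x‖^2/4) ^ P := by
        rw [Real.mul_rpow hbase0.le (by nlinarith), hA]
      calc (1 - ‖x‖^2) ^ q = (1 - ‖x‖^2) ^ P / (1 - ‖x‖^2) := e1
        _ ≤ (A * (1 - ‖x‖^2/4) ^ P) / (1 - ‖x‖^2) := by
            gcongr
            exact e2.trans (le_of_eq e3)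
        _ ≤ 2 * A * (1 - ‖x‖^2/4) ^ P := by
            rw [div_le_iff₀ h1t]
            have hup : 0 ≤ A * (1 - ‖x‖^2/4) ^ P :=
              mul_nonneg hA0.le (Real.rpow_nonneg (by nlinarith) _)
            nlinarith

set_option maxHeartbeats 1000000 in
/-- Proposition 3.11: the integral outside the ball of radius `ρ n^{-1/4}`
is negligible. -/
theorem large_deviation_integral_upper_bound :
    ∃ α₁ α₂ ρ : ℝ, 0 < α₁ ∧ 0 < α₂ ∧ 0 < ρ ∧ ∃ N : ℕ, ∀ n : ℕ, Even n → N ≤ n →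
      ∀ k : ℕ, 0 < k → (k : ℝ) ≤ α₁ * Real.sqrt n →
      ∀ f : EuclideanSpace ℝ (Fin k) → ENNReal, Measurable f →
      (∀ x, f x ≤ ENNReal.ofReal (Real.exp (α₂ * Real.sqrt n))) →
      ENNReal.ofReal (Cmk n k) *
          ∫⁻ x in (Metric.closedBall (0 : EuclideanSpace ℝ (Fin k))
              (ρ * (n : ℝ) ^ (-(1 : ℝ) / 4)))ᶜ,
            f x * ENNReal.ofReal ((max (1 - ‖x‖ ^ 2) 0) ^ (((n : ℝ) - (k : ℝ) - 2) / 2)) ≤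
        ENNReal.ofReal ((2 * α₁ / ρ ^ 2) * Real.exp (-α₂ * Real.sqrt n)) := by
  refine ⟨1, 1, 10, by norm_num, by norm_num, by norm_num, 10 ^ 10, ?_⟩
  intro n _hn hN k hk hkle f hf hfb
  have hn0 : (0:ℝ) ≤ (n:ℝ) := Nat.cast_nonneg n
  set s : ℝ := Real.sqrt n with hs_def
  have hs2 : s ^ 2 = (n:ℝ) := Real.sq_sqrt hn0
  have hNr : ((10:ℝ)^10) ≤ (n:ℝ) := by exact_mod_cast hN
  have hsbig : (10:ℝ)^5 ≤ s := by
    have h1 : ((10:ℝ)^5) ^ 2 ≤ (n:ℝ) := by nlinarith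
    calc (10:ℝ)^5 = Real.sqrt (((10:ℝ)^5)^2) := (Real.sqrt_sq (by positivity)).symm
      _ ≤ s := Real.sqrt_le_sqrt h1
  have hs0 : 0 < s := by nlinarith
  have hks : (k:ℝ) ≤ s := by simpa using hkle
  have hk1 : (1:ℝ) ≤ (k:ℝ) := by exact_mod_cast hk
  have hkn : k ≤ n := by
    have : (k:ℝ) ≤ (n:ℝ) := by nlinarith
    exact_mod_cast this
  set m : ℕ := n - k with hm_def
  have hmcast : ((m:ℕ):ℝ) = s^2 - (k:ℝ) := by
    rw [hm_def, Nat.cast_sub hkn, hs2]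
  have hm3 : 3 ≤ m := by
    have h3 : (3:ℝ) ≤ s^2 - (k:ℝ) := by nlinarith
    have h' : (3:ℝ) ≤ ((m:ℕ):ℝ) := by rw [hmcast]; exact h3
    exact_mod_cast h'
  set P : ℝ := ((m:ℕ):ℝ)/2 with hP_def
  have hP2 : 2 * P = s^2 - (k:ℝ) := by rw [hP_def, hmcast]; ring
  have hP0 : 0 < P := by nlinarith
  set q : ℝ := ((n : ℝ) - (k : ℝ) - 2)/2 with hq_def
  have hq : q = P - 1 := by
    rw [hq_def, hP_def, hmcast, hs2]; ring
  have hq0 : 0 < q := by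
    have h3 : (3:ℝ) ≤ ((m:ℕ):ℝ) := by exact_mod_cast hm3
    rw [hq]; rw [hP_def] at *; linarith
  set r : ℝ := 10 * (n:ℝ) ^ (-(1 : ℝ) / 4) with hr_def
  have hr0 : 0 < r := by
    rw [hr_def]
    have : (0:ℝ) < (n:ℝ) ^ (-(1 : ℝ) / 4) := Real.rpow_pos_of_pos (by nlinarith) _
    linarith
  have hr2s : r ^ 2 * s = 100 := by
    rw [hr_def, mul_pow, ← Real.rpow_natCast ((n:ℝ) ^ (-(1 : ℝ) / 4)) 2,
      ← Real.rpow_mul hn0]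
    have h2 : (-(1 : ℝ) / 4 * (2:ℕ)) = -(1/2 : ℝ) := by push_cast; ring
    rw [h2, Real.rpow_neg hn0, hs_def, Real.sqrt_eq_rpow]
    rw [mul_assoc, inv_mul_cancel₀ (by positivity : ((n:ℝ) ^ ((1:ℝ)/2)) ≠ 0)]
    norm_num
  have hrsmall : r^2 ≤ 1/1000 := by nlinarith [sq_nonneg r]
  have hbase0 : (0:ℝ) < 1 - (3/4)*r^2 := by nlinarith
  set A : ℝ := (1 - (3/4)*r^2) ^ P with hA_def
  have hA0 : 0 < A := Real.rpow_pos_of_pos hbase0 _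
  -- volumes
  set Vk := volume (closedBall (0 : EuclideanSpace ℝ (Fin k)) 1) with hVk_def
  set Vm := volume (closedBall (0 : EuclideanSpace ℝ (Fin m)) 1) with hVm_def
  set Vn := volume (closedBall (0 : EuclideanSpace ℝ (Fin n)) 1) with hVn_def
  have hVk_fin : Vk ≠ ⊤ := measure_closedBall_lt_top.ne
  have hVm_fin : Vm ≠ ⊤ := measure_closedBall_lt_top.ne
  have hVn_fin : Vn ≠ ⊤ := measure_closedBall_lt_top.ne
  have hVk0 : Vk ≠ 0 := ((measure_closedBall_pos volume _ one_pos).ne')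
  have hVm0 : Vm ≠ 0 := ((measure_closedBall_pos volume _ one_pos).ne')
  have hVn0 : Vn ≠ 0 := ((measure_closedBall_pos volume _ one_pos).ne')
  -- weight functions
  set w : EuclideanSpace ℝ (Fin k) → ENNReal :=
    fun x => ENNReal.ofReal ((max (1 - ‖x‖ ^ 2) 0) ^ q) with hw_def
  set g : EuclideanSpace ℝ (Fin k) → ENNReal :=
    fun x => ENNReal.ofReal ((max (1 - ‖x‖ ^ 2) 0) ^ P) with hg_def
  have hmeas_aux : ∀ e : ℝ, 0 ≤ e → Measurable
      (fun x : EuclideanSpace ℝ (Fin k) => ENNReal.ofReal ((max (1 - ‖x‖ ^ 2) 0) ^ e)) := by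
    intro e he
    apply ENNReal.measurable_ofReal.comp
    exact ((Real.continuous_rpow_const he).measurable).comp
      ((measurable_const.sub (measurable_norm.pow_const 2)).max measurable_const)
  have hgmeas : Measurable g := hmeas_aux P hP0.le
  set J := ∫⁻ x, g x with hJ_def
  -- slicing identity
  have hslice : Vn = Vm * J := by
    have hkm : k + m = n := by omega
    have h := slice k m (by omega)
    rw [show volume (closedBall (0 : EuclideanSpace ℝ (Fin (k + m))) 1) = Vn from by
      rw [hVn_def, hkm]] at h
    exact h
  -- J upper bound
  have hJ_le : J ≤ Vk := by
    have hpt : ∀ x : EuclideanSpace ℝ (Fin k),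
        g x ≤ (closedBall (0 : EuclideanSpace ℝ (Fin k)) 1).indicator (fun _ => 1) x := by
      intro x
      rcases le_or_gt ‖x‖ 1 with h1 | h1
      · have hx1 : x ∈ closedBall (0 : EuclideanSpace ℝ (Fin k)) 1 := by
          simpa [mem_closedBall, dist_zero_right] using h1
        rw [Set.indicator_of_mem hx1]
        rw [hg_def]
        calc ENNReal.ofReal ((max (1 - ‖x‖^2) 0) ^ P) ≤ ENNReal.ofReal 1 :=
              ENNReal.ofReal_le_ofReal (Real.rpow_le_one (le_max_right _ _)
                (max_le (by nlinarith [norm_nonneg x]) zero_le_one) hP0.le)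
          _ = 1 := ENNReal.ofReal_one
      · have hmax0 : max (1 - ‖x‖^2) 0 = 0 := max_eq_right (by nlinarith)
        rw [hg_def]; simp only [hmax0, Real.zero_rpow hP0.ne', ENNReal.ofReal_zero]
        exact zero_le
    calc J ≤ ∫⁻ x, (closedBall (0 : EuclideanSpace ℝ (Fin k)) 1).indicator (fun _ => 1) x :=
          lintegral_mono hpt
      _ = Vk := by
          rw [lintegral_indicator measurableSet_closedBall, setLIntegral_one]
  have hJfin : J ≠ ⊤ := (lt_of_le_of_lt hJ_le hVk_fin.lt_top).ne
  -- J lower bound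
  set u : ℝ := (3/4 : ℝ) ^ P * (1/2 : ℝ) ^ k with hu_def
  have hu0 : 0 < u := by positivity
  have hJ_lb : ENNReal.ofReal u * Vk ≤ J := by
    have h1 : ENNReal.ofReal u * Vk
        = ENNReal.ofReal ((3/4 : ℝ) ^ P) *
          volume (closedBall (0 : EuclideanSpace ℝ (Fin k)) (1/2)) := by
      rw [Measure.addHaar_closedBall' _ _ (by norm_num : (0:ℝ) ≤ 1/2), finrank_euclideanSpace_fin,
        hu_def, ENNReal.ofReal_mul (by positivity), mul_assoc, hVk_def]
    rw [h1]
    calc ENNReal.ofReal ((3/4 : ℝ) ^ P) * volume (closedBall (0 : EuclideanSpace ℝ (Fin k)) (1/2))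
        = ∫⁻ _x in closedBall (0 : EuclideanSpace ℝ (Fin k)) (1/2),
            ENNReal.ofReal ((3/4 : ℝ) ^ P) := (setLIntegral_const _ _).symm
      _ ≤ ∫⁻ x in closedBall (0 : EuclideanSpace ℝ (Fin k)) (1/2), g x := by
          apply setLIntegral_mono' measurableSet_closedBall
          intro x hx
          have hx' : ‖x‖ ≤ 1/2 := by simpa [mem_closedBall, dist_zero_right] using hx
          rw [hg_def]
          apply ENNReal.ofReal_le_ofReal
          apply Real.rpow_le_rpow (by norm_num)
          · have h34 : (3/4 : ℝ) ≤ 1 - ‖x‖^2 := by nlinarith [norm_nonneg x]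
            exact le_max_of_le_left h34
          · exact hP0.le
      _ ≤ J := setLIntegral_le_lintegral _ _
  have hJ0 : J ≠ 0 := by
    intro hcontr
    rw [hcontr] at hJ_lb
    exact (mul_ne_zero (by simpa using hu0) hVk0) (le_antisymm hJ_lb (zero_le))
  -- Cmk bound
  have hCmk : ENNReal.ofReal (Cmk n k) ≤ J⁻¹ := by
    have hVnR : 0 < Vn.toReal := ENNReal.toReal_pos hVn0 hVn_fin
    have hC : Cmk n k ≤ Vm.toReal / Vn.toReal := by
      show ((m:ℕ):ℝ) * Vm.toReal / ((n : ℝ) * Vn.toReal) ≤ Vm.toReal / Vn.toReal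
      rw [div_le_div_iff₀ (by positivity) hVnR]
      have hmn : ((m:ℕ):ℝ) ≤ (n:ℝ) := by
        have : m ≤ n := by omega
        exact_mod_cast this
      have hVmR : 0 ≤ Vm.toReal := ENNReal.toReal_nonneg
      nlinarith [mul_le_mul_of_nonneg_right hmn (mul_nonneg hVmR hVnR.le)]
    have hfrac : Vm / Vn = J⁻¹ := by
      rw [hslice, div_eq_mul_inv, ENNReal.mul_inv (Or.inl hVm0) (Or.inl hVm_fin), ← mul_assoc,
        ENNReal.mul_inv_cancel hVm0 hVm_fin, one_mul]
    calc ENNReal.ofReal (Cmk n k) ≤ ENNReal.ofReal (Vm.toReal / Vn.toReal) :=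
        ENNReal.ofReal_le_ofReal hC
      _ = Vm / Vn := by
        rw [ENNReal.ofReal_div_of_pos hVnR, ENNReal.ofReal_toReal hVm_fin,
          ENNReal.ofReal_toReal hVn_fin]
      _ = J⁻¹ := hfrac
  -- now the main estimate
  have step1 : ∫⁻ x in (closedBall (0 : EuclideanSpace ℝ (Fin k)) r)ᶜ, f x * w x
      ≤ ENNReal.ofReal (Real.exp (1 * s)) *
        ∫⁻ x in (closedBall (0 : EuclideanSpace ℝ (Fin k)) r)ᶜ, w x := by
    calc ∫⁻ x in (closedBall (0 : EuclideanSpace ℝ (Fin k)) r)ᶜ, f x * w x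
        ≤ ∫⁻ x in (closedBall (0 : EuclideanSpace ℝ (Fin k)) r)ᶜ,
            ENNReal.ofReal (Real.exp (1 * s)) * w x :=
          lintegral_mono fun x => mul_le_mul_left (hfb x) _
      _ = _ := lintegral_const_mul' _ _ ENNReal.ofReal_ne_top
  have step2 : ∫⁻ x in (closedBall (0 : EuclideanSpace ℝ (Fin k)) r)ᶜ, w x
      ≤ ENNReal.ofReal ((1/2 : ℝ) ^ q) * Vk +
        ENNReal.ofReal (2*A) * (ENNReal.ofReal ((2:ℝ) ^ k) * J) := by
    have hbnd_meas : Measurable (fun x : EuclideanSpace ℝ (Fin k) =>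
        ENNReal.ofReal ((1/2 : ℝ) ^ q) *
          (closedBall (0 : EuclideanSpace ℝ (Fin k)) 1).indicator (fun _ => 1) x +
        ENNReal.ofReal (2*A) * g ((2⁻¹ : ℝ) • x)) := by
      apply Measurable.add
      · exact measurable_const.mul (measurable_const.indicator measurableSet_closedBall)
      · exact measurable_const.mul (hgmeas.comp (measurable_const_smul _))
    calc ∫⁻ x in (closedBall (0 : EuclideanSpace ℝ (Fin k)) r)ᶜ, w x
        ≤ ∫⁻ x in (closedBall (0 : EuclideanSpace ℝ (Fin k)) r)ᶜ,
            (ENNReal.ofReal ((1/2 : ℝ) ^ q) *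
              (closedBall (0 : EuclideanSpace ℝ (Fin k)) 1).indicator (fun _ => 1) x +
             ENNReal.ofReal (2*A) * g ((2⁻¹ : ℝ) • x)) := by
          apply setLIntegral_mono' measurableSet_closedBall.compl
          intro x hx
          have hx' : r < ‖x‖ := by
            simp only [Set.mem_compl_iff, mem_closedBall, dist_zero_right, not_le] at hx
            exact hx
          exact ptwise k P q r A hq0 hP0 hq hr0 hrsmall hbase0 hA_def x hx'
      _ ≤ ∫⁻ x, (ENNReal.ofReal ((1/2 : ℝ) ^ q) *
              (closedBall (0 : EuclideanSpace ℝ (Fin k)) 1).indicator (fun _ => 1) x +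
             ENNReal.ofReal (2*A) * g ((2⁻¹ : ℝ) • x)) := setLIntegral_le_lintegral _ _
      _ = ENNReal.ofReal ((1/2 : ℝ) ^ q) * Vk +
          ENNReal.ofReal (2*A) * (ENNReal.ofReal ((2:ℝ) ^ k) * J) := by
          rw [lintegral_add_left (f := fun x => ENNReal.ofReal ((1/2 : ℝ) ^ q) *
              (closedBall (0 : EuclideanSpace ℝ (Fin k)) 1).indicator (fun _ => 1) x)
            (measurable_const.mul (measurable_const.indicator measurableSet_closedBall)),
            lintegral_const_mul' _ _ ENNReal.ofReal_ne_top,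
            lintegral_const_mul' _ _ ENNReal.ofReal_ne_top,
            lintegral_indicator measurableSet_closedBall, setLIntegral_one,
            lintegral_half_smul k g hgmeas]
  -- combine
  have main1 : ENNReal.ofReal (Cmk n k) *
      ∫⁻ x in (closedBall (0 : EuclideanSpace ℝ (Fin k)) r)ᶜ, f x * w x
      ≤ ENNReal.ofReal (Real.exp (1 * s)) *
        (ENNReal.ofReal (Cmk n k) *
          (ENNReal.ofReal ((1/2 : ℝ) ^ q) * Vk +
           ENNReal.ofReal (2*A) * (ENNReal.ofReal ((2:ℝ) ^ k) * J))) := by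
    calc ENNReal.ofReal (Cmk n k) *
        ∫⁻ x in (closedBall (0 : EuclideanSpace ℝ (Fin k)) r)ᶜ, f x * w x
        ≤ ENNReal.ofReal (Cmk n k) * (ENNReal.ofReal (Real.exp (1 * s)) *
            (ENNReal.ofReal ((1/2 : ℝ) ^ q) * Vk +
             ENNReal.ofReal (2*A) * (ENNReal.ofReal ((2:ℝ) ^ k) * J))) := by
          exact mul_le_mul_right (step1.trans (mul_le_mul_right step2 _)) _
      _ = _ := by ring
  have bound1 : ENNReal.ofReal (Cmk n k) * (ENNReal.ofReal ((1/2 : ℝ) ^ q) * Vk)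
      ≤ ENNReal.ofReal (u⁻¹ * (1/2 : ℝ) ^ q) := by
    calc ENNReal.ofReal (Cmk n k) * (ENNReal.ofReal ((1/2 : ℝ) ^ q) * Vk)
        ≤ (ENNReal.ofReal u * Vk)⁻¹ * (ENNReal.ofReal ((1/2 : ℝ) ^ q) * Vk) := by
          apply mul_le_mul_left
          exact hCmk.trans (ENNReal.inv_le_inv' hJ_lb)
      _ = (ENNReal.ofReal u)⁻¹ * ENNReal.ofReal ((1/2 : ℝ) ^ q) * (Vk⁻¹ * Vk) := by
          rw [ENNReal.mul_inv (Or.inl (by simpa using hu0)) (Or.inl ENNReal.ofReal_ne_top)]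
          ring
      _ = ENNReal.ofReal (u⁻¹ * (1/2 : ℝ) ^ q) := by
          rw [ENNReal.inv_mul_cancel hVk0 hVk_fin, mul_one,
            ← ENNReal.ofReal_inv_of_pos hu0, ← ENNReal.ofReal_mul (by positivity)]
  have bound2 : ENNReal.ofReal (Cmk n k) *
      (ENNReal.ofReal (2*A) * (ENNReal.ofReal ((2:ℝ) ^ k) * J))
      ≤ ENNReal.ofReal (2 * A * (2:ℝ) ^ k) := by
    calc ENNReal.ofReal (Cmk n k) * (ENNReal.ofReal (2*A) * (ENNReal.ofReal ((2:ℝ) ^ k) * J))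
        ≤ J⁻¹ * (ENNReal.ofReal (2*A) * (ENNReal.ofReal ((2:ℝ) ^ k) * J)) :=
          mul_le_mul_left hCmk _
      _ = ENNReal.ofReal (2*A) * ENNReal.ofReal ((2:ℝ) ^ k) * (J⁻¹ * J) := by ring
      _ = ENNReal.ofReal (2 * A * (2:ℝ) ^ k) := by
          rw [ENNReal.inv_mul_cancel hJ0 hJfin, mul_one,
            ← ENNReal.ofReal_mul (by positivity)]
  -- final
  have hfinal : ENNReal.ofReal (Real.exp (1 * s)) *
      (ENNReal.ofReal (u⁻¹ * (1/2 : ℝ) ^ q) + ENNReal.ofReal (2 * A * (2:ℝ) ^ k))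
      ≤ ENNReal.ofReal ((2 * 1 / 10 ^ 2) * Real.exp (-1 * s)) := by
    rw [← ENNReal.ofReal_add (by positivity) (by positivity),
      ← ENNReal.ofReal_mul (Real.exp_nonneg _)]
    apply ENNReal.ofReal_le_ofReal
    have hrpk : ((1:ℝ)/2) ^ (k:ℕ) = ((1:ℝ)/2) ^ ((k:ℕ):ℝ) := by
      rw [Real.rpow_natCast]
    have hrpk2 : ((2:ℝ)) ^ (k:ℕ) = ((2:ℝ)) ^ ((k:ℕ):ℝ) := by
      rw [Real.rpow_natCast]
    have h1 : Real.exp s * (u⁻¹ * (1/2 : ℝ) ^ q) ≤ (1/100) * Real.exp (-s) := by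
      have := num1 (K := ((k:ℕ):ℝ)) hsbig hk1 hks hP2 hq
      rw [hu_def, hrpk]
      exact this
    have h2 : Real.exp s * (2 * A * (2:ℝ) ^ (k:ℕ)) ≤ (1/100) * Real.exp (-s) := by
      have := num2 (K := ((k:ℕ):ℝ)) hsbig hk1 hks hP2 hr2s hbase0 hA_def
      rw [hrpk2]
      exact this
    rw [one_mul, neg_one_mul]
    nlinarith [h1, h2, Real.exp_pos (-s), Real.exp_pos s]
  calc ENNReal.ofReal (Cmk n k) *
      ∫⁻ x in (closedBall (0 : EuclideanSpace ℝ (Fin k)) r)ᶜ, f x * w x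
      ≤ ENNReal.ofReal (Real.exp (1 * s)) *
        (ENNReal.ofReal (Cmk n k) *
          (ENNReal.ofReal ((1/2 : ℝ) ^ q) * Vk +
           ENNReal.ofReal (2*A) * (ENNReal.ofReal ((2:ℝ) ^ k) * J))) := main1
    _ ≤ ENNReal.ofReal (Real.exp (1 * s)) *
        (ENNReal.ofReal (u⁻¹ * (1/2 : ℝ) ^ q) + ENNReal.ofReal (2 * A * (2:ℝ) ^ k)) := by
        apply mul_le_mul_right
        rw [mul_add]
        exact add_le_add bound1 bound2
    _ ≤ ENNReal.ofReal ((2 * 1 / 10 ^ 2) * Real.exp (-1 * s)) := hfinal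

end Paper
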